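/- arXiv:2507.11311 — 3 statements merged into one kernel-verified Lean document; each statement's English description precedes it below -/
import Mathlib

section
/- Let J be a finite set with |J| = n, let m ≥ 1, and let (X₁*,…,X_m*) be any partition of J into m parts. Then there exists a refinement (Y₁,…,Y_k) of this partition into k = m + ⌈√(mn)⌉ parts (allowing empty parts) such that |Y_i| ≤ ⌈√(n/m)⌉ for every i ∈ [k]. -/
open Finset

/-- Let `|J| = n`, `m ≥ 1`, and `(X₁*, …, X_m*)` be any partition of `J` into
`m` parts.  Then there is a refinement `(Y₁, …, Y_k)` into
`k = m + ⌈√(mn)⌉` parts (empty parts allowed) with `|Yᵢ| ≤ ⌈√(n/m)⌉` for all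
`i ∈ [k]`. -/
theorem stmt4 {α : Type*} [DecidableEq α] (J : Finset α) (n m : ℕ)
    (hn : J.card = n) (hm : 0 < m) (X : Fin m → Finset α)
    (hdisj : ∀ i j, i ≠ j → Disjoint (X i) (X j))
    (hcover : Finset.univ.sup X = J) :
    ∃ Y : Fin (m + ⌈Real.sqrt ((m : ℝ) * n)⌉₊) → Finset α,
      (∀ i j, i ≠ j → Disjoint (Y i) (Y j)) ∧
      Finset.univ.sup Y = J ∧
      (∀ i, ∃ j, Y i ⊆ X j) ∧
      (∀ i, (Y i).card ≤ ⌈Real.sqrt ((n : ℝ) / m)⌉₊) := by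
  classical
  set K := m + ⌈Real.sqrt ((m : ℝ) * n)⌉₊ with hK
  rcases Nat.eq_zero_or_pos n with hn0 | hnpos
  · -- trivial case n = 0
    refine ⟨fun _ => ∅, fun i j _ => disjoint_empty_left _, ?_, fun i => ⟨⟨0, hm⟩, empty_subset _⟩,
      fun i => by simp⟩
    have hJ : J = ∅ := card_eq_zero.mp (hn ▸ hn0)
    rw [hJ]
    apply Finset.sup_const
    exact ⟨⟨0, by positivity⟩, mem_univ _⟩
  -- main case
  set q := ⌈Real.sqrt ((n : ℝ) / m)⌉₊ with hqdef
  have hq : 0 < q := by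
    rw [hqdef]
    apply Nat.ceil_pos.mpr
    apply Real.sqrt_pos.mpr
    positivity
  -- count function
  set c : ℕ → ℕ := fun t => if h : t < m then (X ⟨t, h⟩).card / q + 1 else 0 with hc
  set off : Fin m → ℕ := fun j => ∑ t ∈ Finset.range j.val, c t with hoff
  -- which part an element belongs to
  have hex : ∀ x ∈ J, ∃ j, x ∈ X j := by
    intro x hx
    rw [← hcover] at hx
    obtain ⟨j, _, hj⟩ := Finset.mem_sup.mp hx
    exact ⟨j, hj⟩
  set jOf : α → Fin m := fun x => if h : ∃ j, x ∈ X j then h.choose else ⟨0, hm⟩ with hjOf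
  have hjmem : ∀ x ∈ J, x ∈ X (jOf x) := by
    intro x hx
    have h := hex x hx
    simp only [hjOf, dif_pos h]
    exact h.choose_spec
  have hjuniq : ∀ x : α, ∀ j : Fin m, x ∈ X j → jOf x = j := by
    intro x j hxj
    by_contra hne
    have := hdisj _ _ hne
    have hx : x ∈ J := by
      rw [← hcover]
      exact Finset.mem_sup.mpr ⟨j, mem_univ _, hxj⟩
    exact (Finset.disjoint_left.mp this (hjmem x hx)) hxj
  set idx : α → ℕ := fun x => off (jOf x) + ((X (jOf x)).toList.idxOf x) / q with hidx
  -- interval bounds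
  have hcval : ∀ j : Fin m, c j.val = (X j).card / q + 1 := by
    intro j; simp [hc, j.isLt, Fin.eta]
  have hlow : ∀ x ∈ J, off (jOf x) ≤ idx x := fun x _ => Nat.le_add_right _ _
  have hhigh : ∀ x ∈ J, idx x < off (jOf x) + c (jOf x).val := by
    intro x hx
    rw [hidx, hcval]
    simp only [add_lt_add_iff_left]
    have hmem : x ∈ (X (jOf x)).toList := mem_toList.mpr (hjmem x hx)
    have hlt : (X (jOf x)).toList.idxOf x < (X (jOf x)).card := by
      rw [← Finset.length_toList]
      exact List.idxOf_lt_length_iff.mpr hmem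
    have := Nat.div_le_div_right (c := q) (Nat.le_of_lt hlt)
    omega
  have hoffmono : ∀ j₁ j₂ : Fin m, j₁.val < j₂.val → off j₁ + c j₁.val ≤ off j₂ := by
    intro j₁ j₂ h
    have : off j₁ + c j₁.val = ∑ t ∈ Finset.range (j₁.val + 1), c t := by
      rw [hoff, Finset.sum_range_succ]
    rw [this, hoff]
    exact Finset.sum_le_sum_of_subset (Finset.range_subset_range.mpr h)
  have hjdet : ∀ x ∈ J, ∀ y ∈ J, idx x = idx y → jOf x = jOf y := by
    intro x hx y hy hxy
    by_contra hne
    rcases Nat.lt_or_ge (jOf x).val (jOf y).val with h | h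
    · have := hoffmono _ _ h
      have h1 := hhigh x hx; have h2 := hlow y hy; omega
    · have hlt : (jOf y).val < (jOf x).val := by
        rcases Nat.lt_or_ge (jOf y).val (jOf x).val with h' | h'
        · exact h'
        · exact absurd (Fin.ext (Nat.le_antisymm h' h)) hne
      have := hoffmono _ _ hlt
      have h1 := hhigh y hy; have h2 := hlow x hx; omega
  -- total count
  have hsumcard : ∑ j : Fin m, (X j).card = n := by
    rw [← hn, ← hcover, Finset.sup_eq_biUnion]
    rw [Finset.card_biUnion]
    intro i _ j _ hij
    exact hdisj i j hij
  have hsumdiv : ∑ j : Fin m, (X j).card / q ≤ n / q := by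
    rw [Nat.le_div_iff_mul_le hq, Finset.sum_mul]
    calc ∑ j : Fin m, (X j).card / q * q ≤ ∑ j : Fin m, (X j).card :=
          Finset.sum_le_sum fun j _ => Nat.div_mul_le_self _ _
      _ = n := hsumcard
  have hndiv : n / q ≤ ⌈Real.sqrt ((m : ℝ) * n)⌉₊ := by
    have h1 : ((n / q : ℕ) : ℝ) ≤ (n : ℝ) / q := Nat.cast_div_le
    have hqR : Real.sqrt ((n : ℝ) / m) ≤ (q : ℝ) := Nat.le_ceil _
    have hprod : Real.sqrt ((n : ℝ) / m) * Real.sqrt ((m : ℝ) * n) = n := by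
      rw [← Real.sqrt_mul (by positivity)]
      have : (n : ℝ) / m * ((m : ℝ) * n) = (n : ℝ) ^ 2 := by
        field_simp
      rw [this, Real.sqrt_sq (by positivity)]
    have hsq : (0 : ℝ) < Real.sqrt ((m : ℝ) * n) := by
      apply Real.sqrt_pos.mpr; positivity
    have h2 : (n : ℝ) / q ≤ Real.sqrt ((m : ℝ) * n) := by
      rw [div_le_iff₀ (by exact_mod_cast hq)]
      calc (n : ℝ) = Real.sqrt ((n : ℝ) / m) * Real.sqrt ((m : ℝ) * n) := hprod.symm
        _ ≤ (q : ℝ) * Real.sqrt ((m : ℝ) * n) := by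
            apply mul_le_mul_of_nonneg_right hqR (le_of_lt hsq)
        _ = Real.sqrt ((m : ℝ) * n) * q := by ring
    have h3 : ((n / q : ℕ) : ℝ) ≤ Real.sqrt ((m : ℝ) * n) := le_trans h1 h2
    exact_mod_cast le_trans h3 (Nat.le_ceil _)
  have hsumc : ∑ t ∈ Finset.range m, c t ≤ K := by
    have : ∑ t ∈ Finset.range m, c t = ∑ j : Fin m, ((X j).card / q + 1) := by
      rw [← Fin.sum_univ_eq_sum_range]
      exact Finset.sum_congr rfl fun j _ => hcval j
    rw [this, Finset.sum_add_distrib]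
    simp only [Finset.sum_const, Finset.card_univ, Fintype.card_fin, smul_eq_mul, mul_one]
    rw [hK]
    omega
  have hendle : ∀ j : Fin m, off j + c j.val ≤ K := by
    intro j
    have : off j + c j.val = ∑ t ∈ Finset.range (j.val + 1), c t := by
      rw [hoff, Finset.sum_range_succ]
    rw [this]
    exact le_trans (Finset.sum_le_sum_of_subset (Finset.range_subset_range.mpr j.isLt)) hsumc
  have hidxlt : ∀ x ∈ J, idx x < K := fun x hx =>
    lt_of_lt_of_le (hhigh x hx) (hendle _)
  -- the refinement
  refine ⟨fun i => J.filter (fun x => idx x = i.val), ?_, ?_, ?_, ?_⟩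
  · intro i j hij
    rw [Finset.disjoint_left]
    intro x hx hx'
    obtain ⟨_, h1⟩ := Finset.mem_filter.mp hx
    obtain ⟨_, h2⟩ := Finset.mem_filter.mp hx'
    exact hij (Fin.ext (h1.symm.trans h2))
  · apply le_antisymm
    · exact Finset.sup_le fun i _ => Finset.filter_subset _ _
    · intro x hx
      exact Finset.mem_sup.mpr ⟨⟨idx x, hidxlt x hx⟩, mem_univ _,
        Finset.mem_filter.mpr ⟨hx, rfl⟩⟩
  · intro i
    show ∃ j, J.filter (fun x => idx x = i.val) ⊆ X j
    rcases (J.filter (fun x => idx x = i.val)).eq_empty_or_nonempty with he | ⟨x₀, hx₀⟩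
    · exact ⟨⟨0, hm⟩, he ▸ empty_subset _⟩
    · obtain ⟨hx₀J, hx₀i⟩ := Finset.mem_filter.mp hx₀
      refine ⟨jOf x₀, fun x hx => ?_⟩
      obtain ⟨hxJ, hxi⟩ := Finset.mem_filter.mp hx
      have := hjdet x hxJ x₀ hx₀J (hxi.trans hx₀i.symm)
      rw [← this]
      exact hjmem x hxJ
  · intro i
    show (J.filter (fun x => idx x = i.val)).card ≤ q
    rcases (J.filter (fun x => idx x = i.val)).eq_empty_or_nonempty with he | ⟨x₀, hx₀⟩
    · rw [he]; simp
    · obtain ⟨hx₀J, hx₀i⟩ := Finset.mem_filter.mp hx₀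
      set j := jOf x₀ with hj
      set t := ((X j).toList.idxOf x₀) / q with ht
      have hsame : ∀ x ∈ J.filter (fun x => idx x = i.val),
          x ∈ X j ∧ ((X j).toList.idxOf x) / q = t := by
        intro x hx
        obtain ⟨hxJ, hxi⟩ := Finset.mem_filter.mp hx
        have hjx : jOf x = j := hjdet x hxJ x₀ hx₀J (hxi.trans hx₀i.symm)
        have hxmem : x ∈ X j := hjx ▸ hjmem x hxJ
        refine ⟨hxmem, ?_⟩
        have h1 : idx x = idx x₀ := hxi.trans hx₀i.symm
        rw [hidx] at h1
        simp only [hjx, ← hj] at h1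
        omega
      have hmap : ∀ x ∈ J.filter (fun x => idx x = i.val),
          (X j).toList.idxOf x ∈ Finset.Ico (t * q) (t * q + q) := by
        intro x hx
        obtain ⟨_, hdiv⟩ := hsame x hx
        rw [Finset.mem_Ico]
        constructor
        · calc t * q = (X j).toList.idxOf x / q * q := by rw [hdiv]
            _ ≤ (X j).toList.idxOf x := Nat.div_mul_le_self _ _
        · have h1 : (X j).toList.idxOf x / q < t + 1 := by omega
          have h2 := (Nat.div_lt_iff_lt_mul hq).mp h1
          calc (X j).toList.idxOf x < (t + 1) * q := h2
            _ = t * q + q := by ring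
      have hinj : ∀ x ∈ J.filter (fun x => idx x = i.val),
          ∀ y ∈ J.filter (fun x => idx x = i.val),
          (X j).toList.idxOf x = (X j).toList.idxOf y → x = y := by
        intro x hx y hy hxy
        have hxm := (hsame x hx).1
        have hym := (hsame y hy).1
        exact (List.idxOf_inj (mem_toList.mpr hxm)).mp hxy
      calc (J.filter (fun x => idx x = i.val)).card
          ≤ (Finset.Ico (t * q) (t * q + q)).card :=
            Finset.card_le_card_of_injOn _ hmap hinj
        _ = q := by rw [Nat.card_Ico]; omega
end

section
/- Let c : 2^J → ℝ≥0 be monotone and subadditive with c(∅)=0, let |J| = n, m ≥ 2, and k = m + ⌈√(mn)⌉. Let OPT = min over m-partitions (X₁,…,X_m) of J of max_i (c(Xᵢ)+p(Xᵢ)), and let (X₁,…,X_k) be a k-partition of J minimizing max_{i∈[k]} c(Xᵢ) subject to |Xᵢ| ≤ ⌈√(n/m)⌉ for all i. Then max_{i∈[k]} c(Xᵢ) ≤ OPT. -/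
open Finset

lemma supSucc {β : Type*} [SemilatticeSup β] [OrderBot β] {t : ℕ} (f : Fin (t+1) → β) :
    Finset.univ.sup f = f 0 ⊔ Finset.univ.sup (fun i : Fin t => f i.succ) := by
  apply le_antisymm
  · apply Finset.sup_le; intro i _
    refine Fin.cases ?_ (fun i' => ?_) i
    · exact le_sup_left
    · exact le_trans (Finset.le_sup (f := fun i : Fin t => f i.succ) (Finset.mem_univ i')) le_sup_right
  · exact sup_le (Finset.le_sup (Finset.mem_univ 0))
      (Finset.sup_le fun i _ => Finset.le_sup (Finset.mem_univ i.succ))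

lemma splitA {α : Type*} [DecidableEq α] (s : ℕ) :
    ∀ (t : ℕ) (S : Finset α), S.card ≤ t * s →
    ∃ f : Fin t → Finset α, (∀ i j, i ≠ j → Disjoint (f i) (f j)) ∧
      Finset.univ.sup f = S ∧ ∀ i, (f i).card ≤ s := by
  intro t
  induction t with
  | zero =>
    intro S hS
    refine ⟨fun i => i.elim0, fun i => i.elim0, ?_, fun i => i.elim0⟩
    simp only [Nat.zero_mul, Nat.le_zero, Finset.card_eq_zero] at hS
    simp [hS]
  | succ t ih =>
    intro S hS
    obtain ⟨T, hTS, hTcard⟩ := Finset.exists_subset_card_eq (min_le_right s S.card)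
    have hcard' : (S \ T).card ≤ t * s := by
      rw [Finset.card_sdiff_of_subset hTS, hTcard]
      rw [Nat.succ_mul] at hS
      omega
    obtain ⟨f, hfd, hfsup, hfsz⟩ := ih (S \ T) hcard'
    have hsub : ∀ i', f i' ⊆ S \ T := fun i' =>
      hfsup ▸ Finset.le_sup (Finset.mem_univ i')
    have hdTf : ∀ i', Disjoint T (f i') := fun i' =>
      Finset.disjoint_left.mpr fun a ha ha' => (Finset.mem_sdiff.mp (hsub i' ha')).2 ha
    refine ⟨Fin.cons T f, ?_, ?_, ?_⟩
    · intro i j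
      revert i j
      intro i j
      refine Fin.cases ?_ (fun i' => ?_) i <;> refine Fin.cases ?_ (fun j' => ?_) j <;>
        intro hij
      · exact absurd rfl hij
      · simpa using hdTf j'
      · simpa using (hdTf i').symm
      · simp only [Fin.cons_succ]
        exact hfd i' j' (fun h => hij (by rw [h]))
    · rw [supSucc]
      simp only [Fin.cons_zero, Fin.cons_succ]
      rw [hfsup]
      exact Finset.union_sdiff_of_subset hTS
    · intro i
      refine Fin.cases ?_ (fun i' => ?_) i
      · simp only [Fin.cons_zero, hTcard]; exact min_le_left s S.card
      · simp only [Fin.cons_succ]; exact hfsz i'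

lemma splitB {α : Type*} [DecidableEq α] (s : ℕ) :
    ∀ (m : ℕ) (Y : Fin m → Finset α) (t : Fin m → ℕ),
    (∀ i, (Y i).card ≤ t i * s) → (∀ i j, i ≠ j → Disjoint (Y i) (Y j)) →
    ∃ g : Fin (∑ i, t i) → Finset α,
      (∀ i j, i ≠ j → Disjoint (g i) (g j)) ∧
      Finset.univ.sup g = Finset.univ.sup Y ∧
      (∀ j, (g j).card ≤ s) ∧
      (∀ j, ∃ i, g j ⊆ Y i) := by
  intro m
  induction m with
  | zero =>
    intro Y t _ _
    refine ⟨fun _ => ∅, fun _ _ _ => Finset.disjoint_empty_left _, ?_,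
      fun _ => by simp, fun j => (Fin.cast (by simp) j).elim0⟩
    exact le_antisymm (Finset.sup_le fun _ _ => bot_le)
      (Finset.sup_le fun i _ => i.elim0)
  | succ m ih =>
    intro Y t hsz hYd
    obtain ⟨g₀, hg₀d, hg₀sup, hg₀sz⟩ := splitA s (t 0) (Y 0) (hsz 0)
    obtain ⟨g₁, hg₁d, hg₁sup, hg₁sz, hg₁sub⟩ :=
      ih (fun i => Y i.succ) (fun i => t i.succ) (fun i => hsz i.succ)
        (fun i j hij => hYd i.succ j.succ (fun h => hij (Fin.succ_injective _ h)))
    have hN : (∑ i, t i) = t 0 + ∑ i : Fin m, t i.succ := Fin.sum_univ_succ t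
    refine ⟨fun j => if h : (j : ℕ) < t 0 then g₀ ⟨j, h⟩
        else g₁ ⟨(j : ℕ) - t 0, by have := j.isLt; omega⟩, ?_, ?_, ?_, ?_⟩
    · intro j₁ j₂ hne
      have hvne : (j₁ : ℕ) ≠ (j₂ : ℕ) := fun h => hne (Fin.ext h)
      have hsub0 : ∀ a, g₀ a ⊆ Y 0 := fun a => hg₀sup ▸ Finset.le_sup (Finset.mem_univ a)
      have hsub1 : ∀ b, ∃ i : Fin m, g₁ b ⊆ Y i.succ := hg₁sub
      by_cases h1 : (j₁ : ℕ) < t 0 <;> by_cases h2 : (j₂ : ℕ) < t 0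
      · simp only [dif_pos h1, dif_pos h2]
        exact hg₀d _ _ (fun h => hvne (by simpa using congrArg Fin.val h))
      · simp only [dif_pos h1, dif_neg h2]
        obtain ⟨i, hi⟩ := hsub1 ⟨(j₂ : ℕ) - t 0, by have := j₂.isLt; omega⟩
        exact Disjoint.mono (hsub0 _) hi
          (hYd 0 i.succ (fun h => (Fin.succ_ne_zero i) h.symm))
      · simp only [dif_neg h1, dif_pos h2]
        obtain ⟨i, hi⟩ := hsub1 ⟨(j₁ : ℕ) - t 0, by have := j₁.isLt; omega⟩
        exact Disjoint.mono hi (hsub0 _) (hYd i.succ 0 (Fin.succ_ne_zero i))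
      · simp only [dif_neg h1, dif_neg h2]
        exact hg₁d _ _ (fun h => by
          have := congrArg Fin.val h
          simp only at this
          omega)
    · apply le_antisymm
      · apply Finset.sup_le
        intro j _
        by_cases h : (j : ℕ) < t 0
        · simp only [dif_pos h]
          exact le_trans (hg₀sup ▸ Finset.le_sup (Finset.mem_univ _))
            (Finset.le_sup (Finset.mem_univ (0 : Fin (m+1))))
        · simp only [dif_neg h]
          obtain ⟨i, hi⟩ := hg₁sub ⟨(j : ℕ) - t 0, by have := j.isLt; omega⟩
          exact le_trans hi (Finset.le_sup (Finset.mem_univ i.succ))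
      · rw [supSucc Y]
        apply sup_le
        · rw [← hg₀sup]
          apply Finset.sup_le
          intro a _
          have ha : (a : ℕ) < ∑ i, t i := by have := a.isLt; omega
          refine le_trans ?_ (Finset.le_sup (Finset.mem_univ (⟨(a : ℕ), ha⟩ : Fin (∑ i, t i))))
          simp only [dif_pos a.isLt]
          exact le_of_eq (congrArg g₀ (Fin.ext rfl)).symm
        · rw [← hg₁sup]
          apply Finset.sup_le
          intro b _
          have hb : t 0 + (b : ℕ) < ∑ i, t i := by have := b.isLt; omega
          refine le_trans ?_ (Finset.le_sup (Finset.mem_univ (⟨t 0 + (b : ℕ), hb⟩ : Fin (∑ i, t i))))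
          have hnot : ¬ (t 0 + (b : ℕ) < t 0) := by omega
          simp only [dif_neg hnot]
          exact le_of_eq (congrArg g₁ (Fin.ext (by simp))).symm
    · intro j
      by_cases h : (j : ℕ) < t 0
      · simp only [dif_pos h]; exact hg₀sz _
      · simp only [dif_neg h]; exact hg₁sz _
    · intro j
      by_cases h : (j : ℕ) < t 0
      · refine ⟨0, ?_⟩
        simp only [dif_pos h]
        exact hg₀sup ▸ Finset.le_sup (Finset.mem_univ _)
      · obtain ⟨i, hi⟩ := hg₁sub ⟨(j : ℕ) - t 0, by have := j.isLt; omega⟩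
        refine ⟨i.succ, ?_⟩
        simp only [dif_neg h]
        exact hi

lemma sumDivLe {ι : Type*} (u : Finset ι) (f : ι → ℕ) (d : ℕ) :
    ∑ i ∈ u, f i / d ≤ (∑ i ∈ u, f i) / d := by
  classical
  induction u using Finset.induction with
  | empty => simp
  | insert _ _ h ih =>
    rw [Finset.sum_insert h, Finset.sum_insert h]
    exact le_trans (Nat.add_le_add_left ih _) (Nat.add_div_le_add_div _ _ _)


/-- Let `c` be monotone subadditive with `c ∅ = 0`, `|J| = n`, `m ≥ 2`,
`k = m + ⌈√(mn)⌉`.  If `(X₁, …, X_k)` is a `k`-partition of `J` minimizing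
`max_{i∈[k]} c(Xᵢ)` subject to `|Xᵢ| ≤ ⌈√(n/m)⌉` for all `i`, then
`max_{i∈[k]} c(Xᵢ) ≤ OPT`, where `OPT` is the makespan
`max_i (c(Xᵢ*) + p(Xᵢ*))` of any `m`-partition `(X₁*, …, X_m*)` of `J`. -/
theorem stmt6 {α : Type*} [DecidableEq α] (J : Finset α) (n m : ℕ)
    (hn : J.card = n) (hm : 2 ≤ m)
    (c : Finset α → NNReal) (p : α → NNReal)
    (hmono : ∀ X Y : Finset α, X ⊆ Y → c X ≤ c Y)
    (hsub : ∀ X Y : Finset α, Disjoint X Y → c (X ∪ Y) ≤ c X + c Y)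
    (hempty : c ∅ = 0)
    (X : Fin (m + ⌈Real.sqrt ((m : ℝ) * n)⌉₊) → Finset α)
    (hdisj : ∀ i j, i ≠ j → Disjoint (X i) (X j))
    (hcover : Finset.univ.sup X = J)
    (hsize : ∀ i, (X i).card ≤ ⌈Real.sqrt ((n : ℝ) / m)⌉₊)
    (hminX : ∀ X' : Fin (m + ⌈Real.sqrt ((m : ℝ) * n)⌉₊) → Finset α,
      (∀ i j, i ≠ j → Disjoint (X' i) (X' j)) → Finset.univ.sup X' = J →
      (∀ i, (X' i).card ≤ ⌈Real.sqrt ((n : ℝ) / m)⌉₊) →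
      Finset.univ.sup' ⟨⟨0, by omega⟩, Finset.mem_univ _⟩ (fun i => c (X i)) ≤
        Finset.univ.sup' ⟨⟨0, by omega⟩, Finset.mem_univ _⟩ (fun i => c (X' i))) :
    ∀ Xstar : Fin m → Finset α,
      (∀ i j, i ≠ j → Disjoint (Xstar i) (Xstar j)) →
      Finset.univ.sup Xstar = J →
      Finset.univ.sup' ⟨⟨0, by omega⟩, Finset.mem_univ _⟩ (fun i => c (X i)) ≤
        Finset.univ.sup' ⟨⟨0, by omega⟩, Finset.mem_univ _⟩
          (fun i => c (Xstar i) + ∑ j ∈ Xstar i, p j) := by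
  intro Xstar hXd hXc
  set s : ℕ := ⌈Real.sqrt ((n : ℝ) / m)⌉₊ with hs_def
  set K : ℕ := ⌈Real.sqrt ((m : ℝ) * n)⌉₊ with hK_def
  have hm0 : 0 < m := by omega
  by_cases hn0 : n = 0
  · -- J is empty
    have hJ : J = ∅ := Finset.card_eq_zero.mp (by rw [hn, hn0])
    have h1 := hminX (fun _ => ∅) (fun _ _ _ => Finset.disjoint_empty_left _)
      (by rw [hJ]; exact le_antisymm (Finset.sup_le fun _ _ => bot_le) bot_le)
      (fun _ => by simp)
    refine le_trans h1 ?_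
    apply Finset.sup'_le; intro i _; rw [hempty]
    exact zero_le
  · have hspos : (0 : ℕ) < s := by
      rw [hs_def]
      exact Nat.ceil_pos.mpr (Real.sqrt_pos.mpr (div_pos
        (by exact_mod_cast Nat.pos_of_ne_zero hn0) (by exact_mod_cast hm0)))
    set t : Fin m → ℕ := fun i => (Xstar i).card / s + 1 with ht_def
    have hsz : ∀ i, (Xstar i).card ≤ t i * s := by
      intro i
      have h := Nat.lt_div_mul_add (a := (Xstar i).card) hspos
      rw [ht_def]; simp only []
      rw [add_mul, one_mul]
      omega
    obtain ⟨g, hgd, hgsup, hgsz, hgsub⟩ := splitB s m Xstar t hsz hXd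
    -- Σ card = n
    have hsumcard : ∑ i, (Xstar i).card = n := by
      rw [← hn, ← hXc, Finset.sup_eq_biUnion,
        Finset.card_biUnion (fun x _ y _ hxy => hXd x y hxy)]
    -- n ≤ s * K
    have hnsK : n ≤ s * K := by
      have h1 : Real.sqrt ((n : ℝ) / m) ≤ (s : ℝ) := Nat.le_ceil _
      have h2 : Real.sqrt ((m : ℝ) * n) ≤ (K : ℝ) := Nat.le_ceil _
      have hmne : (m : ℝ) ≠ 0 := by exact_mod_cast hm0.ne'
      have heq : ((n : ℝ) / m) * ((m : ℝ) * n) = (n : ℝ) ^ 2 := by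
        field_simp
      have h3 : (n : ℝ) ≤ (s : ℝ) * K := by
        calc (n : ℝ) = Real.sqrt ((n : ℝ) ^ 2) := (Real.sqrt_sq (by positivity)).symm
          _ = Real.sqrt ((n : ℝ) / m) * Real.sqrt ((m : ℝ) * n) := by
              rw [← heq, Real.sqrt_mul (by positivity)]
          _ ≤ (s : ℝ) * K := by
              exact mul_le_mul h1 h2 (Real.sqrt_nonneg _) (by positivity)
      exact_mod_cast (by push_cast; exact h3 : (n : ℝ) ≤ ((s * K : ℕ) : ℝ))
    have hNk : (∑ i, t i) ≤ m + K := by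
      have h1 : (∑ i, t i) = (∑ i, (Xstar i).card / s) + m := by
        rw [ht_def]
        rw [Finset.sum_add_distrib]
        simp [Finset.card_univ]
      have h2 : (∑ i, (Xstar i).card / s) ≤ n / s := by
        calc (∑ i, (Xstar i).card / s) ≤ (∑ i, (Xstar i).card) / s :=
              sumDivLe _ _ _
          _ = n / s := by rw [hsumcard]
      have h3 : n / s ≤ K := by
        calc n / s ≤ (s * K) / s := Nat.div_le_div_right hnsK
          _ = K := Nat.mul_div_cancel_left K hspos
      omega
    -- build X'
    let N : ℕ := ∑ i, t i
    let X' : Fin (m + K) → Finset α := fun j =>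
      if h : (j : ℕ) < N then g ⟨j, h⟩ else ∅
    have hX'pos : ∀ (j : Fin (m + K)) (h : (j : ℕ) < N), X' j = g ⟨j, h⟩ := by
      intro j h
      show (if h' : (j : ℕ) < N then g ⟨j, h'⟩ else ∅) = g ⟨j, h⟩
      simp only [dif_pos h]
    have hX'neg : ∀ (j : Fin (m + K)), ¬ (j : ℕ) < N → X' j = ∅ := by
      intro j h
      show (if h' : (j : ℕ) < N then g ⟨j, h'⟩ else ∅) = ∅
      simp only [dif_neg h]
    have hd' : ∀ i j, i ≠ j → Disjoint (X' i) (X' j) := by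
      intro j₁ j₂ hne
      by_cases h1 : (j₁ : ℕ) < N <;> by_cases h2 : (j₂ : ℕ) < N
      · rw [hX'pos j₁ h1, hX'pos j₂ h2]
        exact hgd _ _ (fun h => hne (Fin.ext (by injection h)))
      · rw [hX'neg j₂ h2]; exact Finset.disjoint_empty_right _
      · rw [hX'neg j₁ h1]; exact Finset.disjoint_empty_left _
      · rw [hX'neg j₁ h1]; exact Finset.disjoint_empty_left _
    have hc' : Finset.univ.sup X' = J := by
      apply le_antisymm
      · apply Finset.sup_le
        intro j _
        by_cases h : (j : ℕ) < N
        · rw [hX'pos j h, ← hXc, ← hgsup]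
          exact Finset.le_sup (f := g) (Finset.mem_univ _)
        · rw [hX'neg j h]; exact bot_le
      · rw [← hXc, ← hgsup]
        apply Finset.sup_le
        intro a _
        have ha : (a : ℕ) < m + K := lt_of_lt_of_le a.isLt hNk
        refine le_trans ?_ (Finset.le_sup (Finset.mem_univ (⟨(a : ℕ), ha⟩ : Fin (m + K))))
        rw [hX'pos _ a.isLt]
    have hs' : ∀ j, (X' j).card ≤ s := by
      intro j
      by_cases h : (j : ℕ) < N
      · rw [hX'pos j h]; exact hgsz _
      · rw [hX'neg j h]; simp
    have h1 := hminX X' hd' hc' hs'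
    refine le_trans h1 ?_
    apply Finset.sup'_le
    intro j _
    by_cases h : (j : ℕ) < N
    · obtain ⟨i, hi⟩ := hgsub ⟨j, h⟩
      calc c (X' j) = c (g ⟨j, h⟩) := by rw [hX'pos j h]
        _ ≤ c (Xstar i) := hmono _ _ hi
        _ ≤ c (Xstar i) + ∑ j ∈ Xstar i, p j := le_self_add
        _ ≤ _ := Finset.le_sup' (fun i => c (Xstar i) + ∑ j ∈ Xstar i, p j) (Finset.mem_univ i)
    · rw [hX'neg j h, hempty]
      exact zero_le
end

section
/- Let m ≥ 2, k = ⌊√m⌋, and let (X₁*,…,X_m*) be an optimal m-partition of J with OPT = max_i(c(Xᵢ*)+p(Xᵢ*)). If (X₁,…,X_k) is a k-partition of J minimizing max_{i∈[k]} c(Xᵢ), then max_{i∈[k]} c(Xᵢ) ≤ ⌈m/k⌉ · OPT. -/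
open Finset

lemma c_sup_le {α β : Type*} [DecidableEq α] [DecidableEq β]
    (c : Finset α → NNReal)
    (hsub : ∀ X Y : Finset α, Disjoint X Y → c (X ∪ Y) ≤ c X + c Y)
    (hempty : c ∅ = 0)
    (f : β → Finset α) (hdisj : ∀ i j, i ≠ j → Disjoint (f i) (f j))
    (S : Finset β) : c (S.sup f) ≤ ∑ j ∈ S, c (f j) := by
  induction S using Finset.cons_induction with
  | empty => simp [hempty]
  | cons a S ha ih =>
    rw [Finset.sup_cons, Finset.sum_cons]
    have hd : Disjoint (f a) (S.sup f) := by
      rw [Finset.disjoint_sup_right]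
      intro j hj
      exact hdisj a j (by rintro rfl; exact ha hj)
    calc c (f a ⊔ S.sup f) = c (f a ∪ S.sup f) := rfl
      _ ≤ c (f a) + c (S.sup f) := hsub _ _ hd
      _ ≤ c (f a) + ∑ j ∈ S, c (f j) := by gcongr

/-- Let `m ≥ 2`, `k = ⌊√m⌋`, and `(X₁*, …, X_m*)` a partition of `J` with
makespan `OPT = maxᵢ (c(Xᵢ*) + p(Xᵢ*))`.  If `(X₁, …, X_k)` is a `k`-partition
of `J` minimizing `max_{i∈[k]} c(Xᵢ)`, then
`max_{i∈[k]} c(Xᵢ) ≤ ⌈m/k⌉ · OPT`. -/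
theorem stmt9 {α : Type*} [DecidableEq α] (J : Finset α)
    (c : Finset α → NNReal) (p : α → NNReal)
    (hmono : ∀ X Y : Finset α, X ⊆ Y → c X ≤ c Y)
    (hsub : ∀ X Y : Finset α, Disjoint X Y → c (X ∪ Y) ≤ c X + c Y)
    (hempty : c ∅ = 0)
    (m : ℕ) (hm : 2 ≤ m)
    (Xstar : Fin m → Finset α)
    (hdisjstar : ∀ i j, i ≠ j → Disjoint (Xstar i) (Xstar j))
    (hcoverstar : Finset.univ.sup Xstar = J)
    (OPT : NNReal)
    (hOPT : OPT = Finset.univ.sup' ⟨⟨0, by omega⟩, Finset.mem_univ _⟩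
        (fun i => c (Xstar i) + ∑ j ∈ Xstar i, p j))
    (X : Fin (Nat.sqrt m) → Finset α)
    (hdisj : ∀ i j, i ≠ j → Disjoint (X i) (X j))
    (hcover : Finset.univ.sup X = J)
    (hminX : ∀ X' : Fin (Nat.sqrt m) → Finset α,
      (∀ i j, i ≠ j → Disjoint (X' i) (X' j)) → Finset.univ.sup X' = J →
      Finset.univ.sup'
          ⟨⟨0, Nat.sqrt_pos.mpr (by omega)⟩, Finset.mem_univ _⟩
          (fun i => c (X i)) ≤
        Finset.univ.sup'
          ⟨⟨0, Nat.sqrt_pos.mpr (by omega)⟩, Finset.mem_univ _⟩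
          (fun i => c (X' i))) :
    Finset.univ.sup' ⟨⟨0, Nat.sqrt_pos.mpr (by omega)⟩, Finset.mem_univ _⟩
        (fun i => c (X i)) ≤
      (⌈(m : ℝ) / (Nat.sqrt m : ℝ)⌉₊ : NNReal) * OPT := by
  set k := Nat.sqrt m with hk
  have hkpos : 0 < k := Nat.sqrt_pos.mpr (by omega)
  set q := ⌈(m : ℝ) / (k : ℝ)⌉₊ with hq
  have hmkq : m ≤ k * q := by
    have h1 : (m : ℝ) / k ≤ q := Nat.le_ceil _
    have h2 : (m : ℝ) ≤ k * q := by
      rw [div_le_iff₀ (by positivity)] at h1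
      linarith [h1]
    exact_mod_cast h2
  -- group j into group j / q
  have hgrp : ∀ j : Fin m, j.val / q < k := by
    intro j
    have hq0 : 0 < q := by
      refine Nat.pos_of_ne_zero ?_
      intro h; rw [h, Nat.mul_zero] at hmkq; omega
    have hmkq' : m ≤ q * k := by rw [Nat.mul_comm]; exact hmkq
    exact Nat.div_lt_of_lt_mul (lt_of_lt_of_le j.isLt hmkq')
  set X' : Fin k → Finset α :=
    fun i => (Finset.univ.filter (fun j : Fin m => j.val / q = i.val)).sup Xstar with hX'
  have hmemX' : ∀ (i : Fin k) (a : α),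
      a ∈ X' i ↔ ∃ j : Fin m, j.val / q = i.val ∧ a ∈ Xstar j := by
    intro i a
    simp [hX', Finset.mem_sup]
  have hdisj' : ∀ i j, i ≠ j → Disjoint (X' i) (X' j) := by
    intro i j hij
    rw [Finset.disjoint_left]
    intro a hai haj
    obtain ⟨u, hu, hau⟩ := (hmemX' i a).1 hai
    obtain ⟨v, hv, hav⟩ := (hmemX' j a).1 haj
    rcases eq_or_ne u v with rfl | huv
    · exact hij (Fin.ext (hu ▸ hv))
    · exact (Finset.disjoint_left.1 (hdisjstar u v huv)) hau hav
  have hcover' : Finset.univ.sup X' = J := by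
    apply le_antisymm
    · apply Finset.sup_le
      intro i _
      apply Finset.sup_le
      intro j _
      exact hcoverstar ▸ Finset.le_sup (Finset.mem_univ j)
    · rw [← hcoverstar]
      apply Finset.sup_le
      intro j _
      have : Xstar j ≤ X' ⟨j.val / q, hgrp j⟩ :=
        Finset.le_sup (by simp)
      exact this.trans (Finset.le_sup (Finset.mem_univ _))
  refine (hminX X' hdisj' hcover').trans ?_
  apply Finset.sup'_le
  intro i _
  -- c (X' i) ≤ q * OPT
  have hOPTle : ∀ j : Fin m, c (Xstar j) ≤ OPT := by
    intro j
    rw [hOPT]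
    calc c (Xstar j) ≤ c (Xstar j) + ∑ a ∈ Xstar j, p a := le_self_add
      _ ≤ _ := Finset.le_sup' (fun i => c (Xstar i) + ∑ a ∈ Xstar i, p a) (Finset.mem_univ j)
  have hcard : (Finset.univ.filter (fun j : Fin m => j.val / q = i.val)).card ≤ q := by
    have := Finset.card_le_card_of_injOn
      (s := Finset.univ.filter (fun j : Fin m => j.val / q = i.val))
      (t := Finset.range q) (fun j => j.val % q)
      (fun j hj => by
        simp only [Finset.mem_coe, Finset.mem_filter] at hj
        have hq0 : 0 < q := by
          refine Nat.pos_of_ne_zero ?_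
          intro h; rw [h, Nat.mul_zero] at hmkq; omega
        exact Finset.mem_range.mpr (Nat.mod_lt _ hq0))
      (fun a ha b hb hab => by
        simp only [Finset.mem_coe, Finset.mem_filter] at ha hb
        have hab' : a.val % q = b.val % q := by simpa using hab
        have hd : a.val / q = b.val / q := by rw [ha.2, hb.2]
        apply Fin.ext
        have h1 := Nat.div_add_mod a.val q
        have h2 := Nat.div_add_mod b.val q
        rw [hd, hab'] at h1
        omega)
    simpa using this
  calc c (X' i) ≤ ∑ j ∈ Finset.univ.filter (fun j : Fin m => j.val / q = i.val), c (Xstar j) :=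
        c_sup_le c hsub hempty Xstar hdisjstar _
    _ ≤ (Finset.univ.filter (fun j : Fin m => j.val / q = i.val)).card • OPT :=
        Finset.sum_le_card_nsmul _ _ _ (fun j _ => hOPTle j)
    _ ≤ q • OPT := by exact nsmul_le_nsmul_left (zero_le : 0 ≤ OPT) hcard
    _ = (q : NNReal) * OPT := by rw [nsmul_eq_mul]
end
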